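/- arXiv:1603.06709 — 3 statements merged into one kernel-verified Lean document; each statement's English description precedes it below -/
import Mathlib

section
/- For every p ∈ (1,∞), setting p* = p/(p−1), and for every x ≥ 0, one has ∫₀^x (1+t^p)^{−2/p} dt = ∫₀^{x/(1+x^p)^{1/p}} (1−t^p)^{−1/p*} dt; that is, the inverse of the generalized tangent τ_{p*,p}(u) := sin_{p*,p}(u)/(cos_{p*,p}(u))^{p*−1} on [0, π_{p*,p}/2) is given by τ_{p*,p}^{−1}(x) = ∫₀^x (1+t^p)^{−2/p} dt. -/
open Real Set MeasureTheory Filter intervalIntegral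

/-- `sin_{p,q}^{-1}(x) = ∫₀ˣ (1-t^q)^{-1/p} dt`. -/
noncomputable def arcsinpq (p q x : ℝ) : ℝ := ∫ t in (0:ℝ)..x, (1 - t ^ q) ^ (-(1 / p))

/-- The generalized π: `π_{p,q} = 2 sin_{p,q}^{-1}(1)`. -/
noncomputable def pipq (p q : ℝ) : ℝ := 2 * arcsinpq p q 1

/-- `sin_{p,q}` on `[0, π_{p,q}/2]`, as the inverse of `arcsinpq p q : [0,1] → [0, π_{p,q}/2]`. -/
noncomputable def sinHalf (p q : ℝ) : ℝ → ℝ := Function.invFunOn (arcsinpq p q) (Set.Icc 0 1)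

/-- `sin_{p,q}` on all of `ℝ`: extended to `[π_{p,q}/2, π_{p,q}]` by `sin_{p,q}(π_{p,q}-x)` and
then to `ℝ` as the odd `2π_{p,q}`-periodic continuation. -/
noncomputable def sinpq (p q x : ℝ) : ℝ :=
  let T := pipq p q
  let y := x - 2 * T * (⌊(x + T) / (2 * T)⌋ : ℝ)
  if y < 0 then -(sinHalf p q (if -y ≤ T / 2 then -y else T + y))
  else sinHalf p q (if y ≤ T / 2 then y else T - y)

/-- `cos_{p,q} = (sin_{p,q})'`. -/
noncomputable def cospq (p q : ℝ) : ℝ → ℝ := deriv (sinpq p q)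

/-- Rising factorial (Pochhammer symbol) `(a)_n = a(a+1)⋯(a+n-1)`. -/
noncomputable def poch (a : ℝ) (n : ℕ) : ℝ := ∏ i ∈ Finset.range n, (a + i)

lemma contAt_integrand {p c s : ℝ} (hp : 0 < p) (h0 : 0 ≤ s) (h1 : s < 1) :
    ContinuousAt (fun t : ℝ => (1 - t ^ p) ^ (-c)) s := by
  have h2 : (1 : ℝ) - s ^ p ≠ 0 := by
    have := Real.rpow_lt_one h0 h1 hp
    nlinarith
  have hb : ContinuousAt (fun t : ℝ => 1 - t ^ p) s :=
    continuousAt_const.sub (Real.continuousAt_rpow_const s p (Or.inr hp.le))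
  exact hb.rpow_const (Or.inl h2)

lemma integrable_integrand {p c : ℝ} (hp : 1 ≤ p) (hc0 : 0 ≤ c) (hc1 : c < 1) :
    IntervalIntegrable (fun t : ℝ => (1 - t ^ p) ^ (-c)) volume 0 1 := by
  have hdom : IntervalIntegrable (fun t : ℝ => (1 - t) ^ (-c)) volume 0 1 := by
    have := (intervalIntegrable_rpow' (a := 0) (b := 1) (r := -c) (by linarith)).comp_sub_left 1
    simpa using this.symm
  refine hdom.mono_fun ?_ ?_
  · apply Measurable.aestronglyMeasurable
    fun_prop
  · rw [EventuallyLE, ae_restrict_iff' measurableSet_uIoc]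
    filter_upwards with t ht
    rw [uIoc_of_le (by norm_num : (0:ℝ) ≤ 1)] at ht
    obtain ⟨ht0, ht1⟩ := ht
    have h1 : t ^ p ≤ t := by
      calc t ^ p ≤ t ^ (1:ℝ) := Real.rpow_le_rpow_of_exponent_ge ht0 ht1 hp
      _ = t := Real.rpow_one t
    have h2 : (0:ℝ) ≤ 1 - t ^ p := by
      have : 0 ≤ t ^ p := Real.rpow_nonneg ht0.le p
      linarith
    have h3 : (1 - t ^ p) ^ (-c) ≤ (1 - t) ^ (-c) := by
      rcases eq_or_lt_of_le (show 1 - t ≤ 1 - t ^ p by linarith) with h | h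
      · rw [h]
      · rcases eq_or_lt_of_le (show 0 ≤ 1 - t by linarith) with h0 | h0
        · exfalso
          have ht : t = 1 := by linarith
          rw [ht, Real.one_rpow] at h
          linarith
        · exact Real.rpow_le_rpow_of_nonpos h0 (by linarith) (by linarith)
    rw [Real.norm_eq_abs, Real.norm_eq_abs, abs_of_nonneg (Real.rpow_nonneg h2 _),
      abs_of_nonneg (Real.rpow_nonneg (by linarith) _)]
    exact h3

noncomputable def Fgen (p c x : ℝ) : ℝ := ∫ t in (0:ℝ)..x, (1 - t ^ p) ^ (-c)

lemma integrable_sub {p c : ℝ} (hp : 1 ≤ p) (hc0 : 0 ≤ c) (hc1 : c < 1)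
    {a b : ℝ} (ha : a ∈ Icc (0:ℝ) 1) (hb : b ∈ Icc (0:ℝ) 1) :
    IntervalIntegrable (fun t : ℝ => (1 - t ^ p) ^ (-c)) volume a b :=
  (integrable_integrand hp hc0 hc1).mono_set (by
    rw [uIcc_of_le (by norm_num : (0:ℝ) ≤ 1)]
    exact uIcc_subset_Icc ha hb)

lemma Fgen_strictMono {p c : ℝ} (hp : 1 ≤ p) (hc0 : 0 ≤ c) (hc1 : c < 1) :
    StrictMonoOn (Fgen p c) (Icc 0 1) := by
  intro a ha b hb hab
  have key : Fgen p c b = Fgen p c a + ∫ t in a..b, (1 - t ^ p) ^ (-c) := by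
    rw [Fgen, Fgen, intervalIntegral.integral_add_adjacent_intervals
      (integrable_sub hp hc0 hc1 (by norm_num) ha) (integrable_sub hp hc0 hc1 ha hb)]
  rw [key]
  have hpos : 0 < ∫ t in a..b, (1 - t ^ p) ^ (-c) := by
    apply intervalIntegral_pos_of_pos_on (integrable_sub hp hc0 hc1 ha hb) _ hab
    intro x hx
    apply Real.rpow_pos_of_pos
    have h1 : x ^ p < 1 := by
      have e1 : x ^ p ≤ x ^ (1:ℝ) :=
        Real.rpow_le_rpow_of_exponent_ge (lt_of_le_of_lt ha.1 hx.1) (le_trans hx.2.le hb.2) hp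
      rw [Real.rpow_one] at e1
      exact lt_of_le_of_lt e1 (lt_of_lt_of_le hx.2 hb.2)
    linarith
  linarith

lemma Fgen_cont {p c : ℝ} (hp : 1 ≤ p) (hc0 : 0 ≤ c) (hc1 : c < 1) :
    ContinuousOn (Fgen p c) (Icc 0 1) := by
  have h := intervalIntegral.continuousOn_primitive_interval (a := 0) (b := 1)
    (μ := volume) (f := fun t : ℝ => (1 - t ^ p) ^ (-c)) ?_
  · exact (by simpa [uIcc_of_le (by norm_num : (0:ℝ) ≤ 1)] using h :
      ContinuousOn (fun x => ∫ t in (0:ℝ)..x, (1 - t ^ p) ^ (-c)) (Icc 0 1))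
  · rw [uIcc_of_le (by norm_num : (0:ℝ) ≤ 1)]
    exact (intervalIntegrable_iff_integrableOn_Icc_of_le (by norm_num)).mp
      (integrable_integrand hp hc0 hc1)

lemma Fgen_zero (p c : ℝ) : Fgen p c 0 = 0 := intervalIntegral.integral_same

lemma Fgen_image {p c : ℝ} (hp : 1 ≤ p) (hc0 : 0 ≤ c) (hc1 : c < 1) :
    Fgen p c '' (Icc 0 1) = Icc 0 (Fgen p c 1) := by
  apply Subset.antisymm
  · rintro _ ⟨s, hs, rfl⟩
    have hmono := (Fgen_strictMono hp hc0 hc1).monotoneOn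
    constructor
    · rw [← Fgen_zero p c]
      exact hmono (by norm_num) hs hs.1
    · exact hmono hs (by norm_num) hs.2
  · have := intermediate_value_Icc (by norm_num : (0:ℝ) ≤ 1) (Fgen_cont hp hc0 hc1)
    rwa [Fgen_zero] at this

lemma base_pos {p t : ℝ} (ht : 0 ≤ t) : (0:ℝ) < 1 + t ^ p := by
  have : 0 ≤ t ^ p := Real.rpow_nonneg ht p
  linarith

lemma hasDerivAt_subst {p : ℝ} (hp : 1 < p) {t : ℝ} (ht : 0 ≤ t) :
    HasDerivAt (fun t : ℝ => t * (1 + t ^ p) ^ (-(1/p))) ((1 + t ^ p) ^ (-(1 + 1/p))) t := by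
  have hp0 : (0:ℝ) < p := by linarith
  have hB : (0:ℝ) < 1 + t ^ p := base_pos ht
  have h1 : HasDerivAt (fun t : ℝ => 1 + t ^ p) (p * t ^ (p - 1)) t :=
    (Real.hasDerivAt_rpow_const (Or.inr hp.le)).const_add 1
  have h2 : HasDerivAt (fun t : ℝ => (1 + t ^ p) ^ (-(1/p)))
      ((-(1/p)) * (1 + t ^ p) ^ (-(1/p) - 1) * (p * t ^ (p - 1))) t := by
    have := (Real.hasDerivAt_rpow_const (p := -(1/p)) (x := 1 + t ^ p) (Or.inl hB.ne')).comp t h1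
    exact this
  have h3 := (hasDerivAt_id t).mul h2
  refine (h3.congr_deriv ?_ : HasDerivAt (fun t : ℝ => t * (1 + t ^ p) ^ (-(1/p))) _ t)
  symm
  have htp : t * t ^ (p - 1) = t ^ p := by
    rcases eq_or_lt_of_le ht with h | h
    · rw [← h, Real.zero_rpow hp0.ne', zero_mul]
    · nth_rewrite 1 [← Real.rpow_one t]
      rw [← Real.rpow_add h]
      ring_nf
  have key : (1 + t ^ p) ^ (-(1/p)) = (1 + t ^ p) ^ (-(1/p) - 1) * (1 + t ^ p) := by
    nth_rewrite 3 [← Real.rpow_one (1 + t ^ p)]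
    rw [← Real.rpow_add hB]
    ring_nf
  simp only [id, one_mul]
  have e : -(1 + 1/p) = -(1/p) - 1 := by ring
  rw [e, key]
  generalize (1 + t ^ p) ^ (-(1/p) - 1) = A
  have e2 : t * (-(1/p) * A * (p * t ^ (p-1))) = -(A * t ^ p) := by
    have e3 : t * (-(1/p) * A * (p * t ^ (p-1))) = -((1/p)*p) * A * (t * t^(p-1)) := by ring
    rw [e3, htp]
    field_simp
  rw [e2]
  ring

lemma subst_mem_Ico {p t : ℝ} (hp : 1 < p) (ht : 0 ≤ t) :
    t * (1 + t ^ p) ^ (-(1/p)) ∈ Ico (0:ℝ) 1 := by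
  have hp0 : (0:ℝ) < p := by linarith
  have hB : (0:ℝ) < 1 + t ^ p := base_pos ht
  have hBp : (0:ℝ) < (1 + t ^ p) ^ (1/p) := Real.rpow_pos_of_pos hB _
  have hneg : (1 + t ^ p) ^ (-(1/p)) = ((1 + t ^ p) ^ (1/p))⁻¹ := by
    rw [← Real.rpow_neg_one ((1 + t ^ p) ^ (1/p)), ← Real.rpow_mul hB.le]
    ring_nf
  constructor
  · positivity
  · rw [hneg, ← div_eq_mul_inv, div_lt_one hBp]
    have h1 : t = (t ^ p) ^ (1/p) := by
      rw [← Real.rpow_mul ht, mul_one_div, div_self hp0.ne', Real.rpow_one]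
    nth_rewrite 1 [h1]
    exact Real.rpow_lt_rpow (Real.rpow_nonneg ht p) (by linarith) (by positivity)

lemma pointwise_subst {p c t : ℝ} (hp : 1 < p) (hc : c = 1 - 1/p) (ht : 0 ≤ t) :
    (1 + t ^ p) ^ (-(1 + 1/p)) * (1 - (t * (1 + t ^ p) ^ (-(1/p))) ^ p) ^ (-c)
      = (1 + t ^ p) ^ (-(2/p)) := by
  have hp0 : (0:ℝ) < p := by linarith
  have hB : (0:ℝ) < 1 + t ^ p := base_pos ht
  have h1 : (t * (1 + t ^ p) ^ (-(1/p))) ^ p = t ^ p * (1 + t ^ p) ^ (-1 : ℝ) := by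
    rw [Real.mul_rpow ht (Real.rpow_nonneg hB.le _), ← Real.rpow_mul hB.le]
    congr 1
    field_simp
  have h2 : (1 : ℝ) - t ^ p * (1 + t ^ p) ^ (-1 : ℝ) = (1 + t ^ p) ^ (-1 : ℝ) := by
    rw [Real.rpow_neg_one]
    field_simp
    ring
  have h3 : ((1 + t ^ p) ^ (-1 : ℝ)) ^ (-c) = (1 + t ^ p) ^ c := by
    rw [← Real.rpow_mul hB.le]
    ring_nf
  rw [h1, h2, h3, ← Real.rpow_add hB]
  congr 1
  rw [hc]; ring

lemma part1 {p c : ℝ} (hp : 1 < p) (hc : c = 1 - 1/p) (x : ℝ) (hx : 0 ≤ x) :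
    (∫ t in (0:ℝ)..x, (1 + t ^ p) ^ (-(2/p)))
      = ∫ t in (0:ℝ)..(x / (1 + x ^ p) ^ (1/p)), (1 - t ^ p) ^ (-c) := by
  have hp0 : (0:ℝ) < p := by linarith
  have hc0 : 0 < c := by rw [hc]; have : 1/p < 1 := by rw [div_lt_one hp0]; exact hp
                         linarith
  have hc1 : c < 1 := by rw [hc]; have : 0 < 1/p := by positivity
                         linarith
  set f : ℝ → ℝ := fun t => t * (1 + t ^ p) ^ (-(1/p)) with hf
  set g : ℝ → ℝ := fun s => (1 - s ^ p) ^ (-c) with hg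
  have hIcc : uIcc (0:ℝ) x = Icc 0 x := uIcc_of_le hx
  have hmem : ∀ t ∈ uIcc (0:ℝ) x, 0 ≤ t := by
    intro t ht; rw [hIcc] at ht; exact ht.1
  have hderiv : ∀ t ∈ uIcc (0:ℝ) x, HasDerivAt f ((1 + t ^ p) ^ (-(1 + 1/p))) t :=
    fun t ht => hasDerivAt_subst hp (hmem t ht)
  have hcont : ContinuousOn (fun t : ℝ => (1 + t ^ p) ^ (-(1 + 1/p))) (uIcc (0:ℝ) x) := by
    intro t ht
    apply ContinuousAt.continuousWithinAt
    have hB := base_pos (p := p) (hmem t ht)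
    have : ContinuousAt (fun t : ℝ => 1 + t ^ p) t :=
      continuousAt_const.add (Real.continuousAt_rpow_const t p (Or.inr hp0.le))
    exact this.rpow_const (Or.inl hB.ne')
  have himg : ContinuousOn g (f '' uIcc (0:ℝ) x) := by
    intro s hs
    obtain ⟨t, ht, rfl⟩ := hs
    have := subst_mem_Ico hp (hmem t ht)
    exact (contAt_integrand hp0 this.1 this.2).continuousWithinAt
  have key := intervalIntegral.integral_comp_smul_deriv' hderiv hcont himg
  have hf0 : f 0 = 0 := by simp [hf]
  have hfx : f x = x / (1 + x ^ p) ^ (1/p) := by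
    rw [hf]
    simp only
    rw [Real.rpow_neg (base_pos hx).le]
    ring
  rw [hf0, hfx] at key
  rw [← key]
  apply intervalIntegral.integral_congr
  intro t ht
  have := pointwise_subst hp hc (hmem t ht)
  simpa [smul_eq_mul, hg, hf] using this.symm

lemma inv_spec {p c : ℝ} (hp : 1 ≤ p) (hc0 : 0 ≤ c) (hc1 : c < 1)
    {u : ℝ} (hu : u ∈ Icc 0 (Fgen p c 1)) :
    Function.invFunOn (Fgen p c) (Icc 0 1) u ∈ Icc 0 1 ∧
      Fgen p c (Function.invFunOn (Fgen p c) (Icc 0 1) u) = u := by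
  have h : u ∈ Fgen p c '' Icc 0 1 := by rw [Fgen_image hp hc0 hc1]; exact hu
  obtain ⟨a, ha, hfa⟩ := h
  exact ⟨Function.invFunOn_mem ⟨a, ha, hfa⟩, Function.invFunOn_eq ⟨a, ha, hfa⟩⟩

lemma contAt_S {p c : ℝ} (hp : 1 ≤ p) (hc0 : 0 ≤ c) (hc1 : c < 1)
    {u : ℝ} (h0 : 0 < u) (hM : u < Fgen p c 1) :
    ContinuousAt (Function.invFunOn (Fgen p c) (Icc 0 1)) u := by
  have hmono := Fgen_strictMono hp hc0 hc1
  obtain ⟨hSmem, hSeq⟩ := inv_spec hp hc0 hc1 (u := u) ⟨h0.le, hM.le⟩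
  generalize hs : Function.invFunOn (Fgen p c) (Icc 0 1) u = s at hSmem hSeq
  have hs0 : 0 < s := by
    rcases eq_or_lt_of_le hSmem.1 with h | h
    · exfalso
      rw [← h, Fgen_zero] at hSeq
      linarith
    · exact h
  have hs1 : s < 1 := by
    rcases eq_or_lt_of_le hSmem.2 with h | h
    · exfalso; rw [h] at hSeq; rw [← hSeq] at hM; exact lt_irrefl _ hM
    · exact h
  rw [Metric.continuousAt_iff]
  intro ε hε
  set ε' := min (ε/2) (min (s/2) ((1-s)/2)) with hε'def
  have hε' : 0 < ε' := by
    apply lt_min (by linarith); exact lt_min (by linarith) (by linarith)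
  have hε'le : ε' ≤ ε/2 := min_le_left _ _
  have hε's : ε' ≤ s/2 := le_trans (min_le_right _ _) (min_le_left _ _)
  have hε's1 : ε' ≤ (1-s)/2 := le_trans (min_le_right _ _) (min_le_right _ _)
  have hml : s - ε' ∈ Icc (0:ℝ) 1 := ⟨by linarith, by linarith⟩
  have hmr : s + ε' ∈ Icc (0:ℝ) 1 := ⟨by linarith, by linarith⟩
  have hlt1 : Fgen p c (s - ε') < u := by
    rw [← hSeq]; exact hmono hml hSmem (by linarith)
  have hlt2 : u < Fgen p c (s + ε') := by
    rw [← hSeq]; exact hmono hSmem hmr (by linarith)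
  refine ⟨min (Fgen p c (s + ε') - u) (u - Fgen p c (s - ε')), lt_min (by linarith) (by linarith), ?_⟩
  intro y hy
  rw [Real.dist_eq] at hy
  have habs := abs_lt.mp hy
  have hd1 := min_le_right (Fgen p c (s + ε') - u) (u - Fgen p c (s - ε'))
  have hd2 := min_le_left (Fgen p c (s + ε') - u) (u - Fgen p c (s - ε'))
  have hy1 : Fgen p c (s - ε') < y := by linarith [habs.1]
  have hy2 : y < Fgen p c (s + ε') := by linarith [habs.2]
  have hyIcc : y ∈ Icc 0 (Fgen p c 1) := by
    constructor
    · have h5 : Fgen p c 0 ≤ Fgen p c (s - ε') := by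
        rcases eq_or_lt_of_le hml.1 with h | h
        · rw [h]
        · exact (hmono (by norm_num) hml h).le
      rw [Fgen_zero] at h5; linarith
    · have h5 : Fgen p c (s + ε') ≤ Fgen p c 1 := by
        rcases eq_or_lt_of_le hmr.2 with h | h
        · rw [h]
        · exact (hmono hmr (by norm_num) h).le
      linarith
  obtain ⟨hym, hyeq⟩ := inv_spec hp hc0 hc1 hyIcc
  have hb1 : s - ε' < Function.invFunOn (Fgen p c) (Icc 0 1) y := by
    have h6 : Fgen p c (s - ε') < Fgen p c (Function.invFunOn (Fgen p c) (Icc 0 1) y) := by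
      rw [hyeq]; exact hy1
    exact (hmono.lt_iff_lt hml hym).mp h6
  have hb2 : Function.invFunOn (Fgen p c) (Icc 0 1) y < s + ε' := by
    have h6 : Fgen p c (Function.invFunOn (Fgen p c) (Icc 0 1) y) < Fgen p c (s + ε') := by
      rw [hyeq]; exact hy2
    exact (hmono.lt_iff_lt hym hmr).mp h6
  rw [Real.dist_eq, hs, abs_lt]
  constructor <;> linarith

lemma Fgen_hasDerivAt {p c : ℝ} (hp : 1 ≤ p) (hc0 : 0 ≤ c) (hc1 : c < 1)
    {s : ℝ} (h0 : 0 ≤ s) (h1 : s < 1) :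
    HasDerivAt (Fgen p c) ((1 - s ^ p) ^ (-c)) s := by
  apply intervalIntegral.integral_hasDerivAt_right
    (integrable_sub hp hc0 hc1 (by norm_num) ⟨h0, h1.le⟩)
  · refine ⟨univ, univ_mem, Measurable.aestronglyMeasurable ?_⟩
    fun_prop
  · exact contAt_integrand (by linarith) h0 h1


/-- For `x ≥ 0`, `∫₀^x (1+t^p)^{-2/p} dt = ∫₀^{x/(1+x^p)^{1/p}} (1-t^p)^{-1/p*} dt`;
moreover the generalized tangent `τ_{p*,p}(u) = sin_{p*,p}(u)/cos_{p*,p}(u)^{p*-1}` on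
`[0, π_{p*,p}/2)` has inverse `τ_{p*,p}^{-1}(x) = ∫₀^x (1+t^p)^{-2/p} dt`. -/
theorem generalized_tangent_integral (p : ℝ) (hp : 1 < p) :
    (∀ x : ℝ, 0 ≤ x →
      (∫ t in (0:ℝ)..x, (1 + t ^ p) ^ (-(2/p)))
        = ∫ t in (0:ℝ)..(x / (1 + x ^ p) ^ (1/p)), (1 - t ^ p) ^ (-(1/(p/(p-1))))) ∧
    ∀ u ∈ Set.Ico (0:ℝ) (pipq (p/(p-1)) p / 2),
      (∫ t in (0:ℝ)..(sinpq (p/(p-1)) p u / cospq (p/(p-1)) p u ^ (p/(p-1) - 1)),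
        (1 + t ^ p) ^ (-(2/p))) = u := by
  have hp1 : (0:ℝ) < p - 1 := by linarith
  have hp0 : (0:ℝ) < p := by linarith
  have hc : 1/(p/(p-1)) = 1 - 1/p := by field_simp
  have hinvp : 0 < 1/p := by positivity
  have hinvp1 : 1/p < 1 := by rw [div_lt_one hp0]; exact hp
  have hc0 : 0 ≤ 1/(p/(p-1)) := by rw [hc]; linarith
  have hc1 : 1/(p/(p-1)) < 1 := by rw [hc]; linarith
  -- identification of arcsinpq with Fgen
  have hFeq : arcsinpq (p/(p-1)) p = Fgen p (1/(p/(p-1))) := rfl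
  have hSeqdef : sinHalf (p/(p-1)) p = Function.invFunOn (Fgen p (1/(p/(p-1)))) (Icc 0 1) := rfl
  set c : ℝ := 1/(p/(p-1)) with hcdef
  set F : ℝ → ℝ := Fgen p c with hFdef
  set S : ℝ → ℝ := Function.invFunOn F (Icc 0 1) with hSdef
  have hmono := Fgen_strictMono hp.le hc0 hc1
  have hM0 : 0 < F 1 := by
    have := hmono (left_mem_Icc.mpr (by norm_num)) (right_mem_Icc.mpr (by norm_num)) one_pos
    rwa [Fgen_zero] at this
  have hT : pipq (p/(p-1)) p = 2 * F 1 := by rw [pipq, hFeq]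
  have hT2 : pipq (p/(p-1)) p / 2 = F 1 := by rw [hT]; ring
  refine ⟨fun x hx => part1 hp hc x hx, ?_⟩
  rintro u ⟨hu0, huM⟩
  rw [hT2] at huM
  -- local formula for sinpq on [0, F 1)
  have hloc : ∀ y : ℝ, 0 ≤ y → y < F 1 → sinpq (p/(p-1)) p y = S y := by
    intro y hy0 hyM
    have hfl : ⌊(y + pipq (p/(p-1)) p) / (2 * pipq (p/(p-1)) p)⌋ = 0 := by
      rw [Int.floor_eq_zero_iff]
      constructor
      · apply div_nonneg (by rw [hT]; linarith) (by rw [hT]; linarith)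
      · rw [div_lt_one (by rw [hT]; linarith), hT]
        linarith
    rw [sinpq]
    simp only [hfl, Int.cast_zero, mul_zero, sub_zero]
    rw [if_neg (not_lt.mpr hy0), if_pos (by rw [hT2]; linarith), hSeqdef]
  rcases eq_or_lt_of_le hu0 with hu0' | hu0'
  · -- u = 0
    rw [← hu0']
    have hS0 : S 0 = 0 := by
      obtain ⟨hm, he⟩ := inv_spec hp.le hc0 hc1 (u := 0) ⟨le_refl _, hM0.le⟩
      rcases eq_or_lt_of_le hm.1 with h | h
      · exact h.symm
      · exfalso
        have := hmono (left_mem_Icc.mpr (by norm_num)) hm h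
        rw [Fgen_zero, he] at this
        exact lt_irrefl _ this
    rw [hloc 0 le_rfl hM0, hS0, zero_div, intervalIntegral.integral_same]
  · -- 0 < u
    obtain ⟨hSmem, hSval⟩ := inv_spec hp.le hc0 hc1 (u := u) ⟨hu0, huM.le⟩
    set s : ℝ := S u with hsdef
    have hs0 : 0 < s := by
      rcases eq_or_lt_of_le hSmem.1 with h | h
      · exfalso; rw [← h, Fgen_zero] at hSval; linarith
      · exact h
    have hs1 : s < 1 := by
      rcases eq_or_lt_of_le hSmem.2 with h | h
      · exfalso; rw [h] at hSval; rw [← hSval] at huM; exact lt_irrefl _ huM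
      · exact h
    have hsp1 : s ^ p < 1 := Real.rpow_lt_one hs0.le hs1 hp0
    have hbase : (0:ℝ) < 1 - s ^ p := by linarith
    -- neighbourhood
    have hnbhd : Ioo (0:ℝ) (F 1) ∈ nhds u := isOpen_Ioo.mem_nhds ⟨hu0', huM⟩
    -- derivative of S at u
    have hdS : HasDerivAt S (((1 - s ^ p) ^ (-c))⁻¹) u := by
      apply HasDerivAt.of_local_left_inverse (contAt_S hp.le hc0 hc1 hu0' huM)
        (Fgen_hasDerivAt hp.le hc0 hc1 hs0.le hs1)
        (ne_of_gt (Real.rpow_pos_of_pos hbase _))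
      filter_upwards [hnbhd] with y hy
      exact (inv_spec hp.le hc0 hc1 ⟨hy.1.le, hy.2.le⟩).2
    have hcos : cospq (p/(p-1)) p u = (1 - s ^ p) ^ c := by
      have hev : sinpq (p/(p-1)) p =ᶠ[nhds u] S := by
        filter_upwards [hnbhd] with y hy
        exact hloc y hy.1.le hy.2
      rw [cospq, hev.deriv_eq, hdS.deriv, ← Real.rpow_neg hbase.le, neg_neg]
    have hsin : sinpq (p/(p-1)) p u = s := hloc u hu0 huM
    rw [hsin, hcos]
    -- the power of cos
    have hpow : ((1 - s ^ p) ^ c) ^ (p/(p-1) - 1) = (1 - s ^ p) ^ (1/p : ℝ) := by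
      rw [← Real.rpow_mul hbase.le]
      congr 1
      rw [hc]
      field_simp
      ring
    rw [hpow]
    set D : ℝ := (1 - s ^ p) ^ (1/p : ℝ) with hDdef
    have hD0 : 0 < D := Real.rpow_pos_of_pos hbase _
    have hxval : 0 ≤ s / D := by positivity
    rw [part1 hp hc (s / D) hxval]
    -- show the upper limit is s
    have hDp : D ^ p = 1 - s ^ p := by
      rw [hDdef, ← Real.rpow_mul hbase.le, one_div_mul_cancel hp0.ne', Real.rpow_one]
    have hxp : (s / D) ^ p = s ^ p / (1 - s ^ p) := by
      rw [Real.div_rpow hs0.le hD0.le, hDp]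
    have hupper : s / D / (1 + (s / D) ^ p) ^ (1/p : ℝ) = s := by
      rw [hxp]
      have h1 : (1:ℝ) + s ^ p / (1 - s ^ p) = (1 - s ^ p)⁻¹ := by
        field_simp
        ring
      rw [h1, Real.inv_rpow hbase.le, ← hDdef]
      field_simp
    rw [hupper]
    exact hSval
end

section
/- For every x ∈ [0, π_{4/3,4}/4), one has the multiple-angle formula sin_{4/3,4}(2x) = 2·sin_{4/3,4}(x)·(cos_{4/3,4}(x))^{1/3} / √(1 + 4·(sin_{4/3,4}(x))^4·(cos_{4/3,4}(x))^{4/3}). -/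
open Real Set MeasureTheory Filter

noncomputable def EGLg (t : ℝ) : ℝ := (1 - t ^ (4:ℕ)) ^ (-(3/4) : ℝ)

lemma EGL_F_eq (x : ℝ) : arcsinpq (4/3) 4 x = ∫ t in (0:ℝ)..x, EGLg t := by
  unfold arcsinpq EGLg
  norm_num

lemma EGLg_nonneg (t : ℝ) (h : t ∈ Icc (0:ℝ) 1) : 0 ≤ EGLg t := by
  unfold EGLg
  apply Real.rpow_nonneg
  have := pow_le_one₀ h.1 h.2 (n := 4)
  linarith

lemma EGLg_pos {t : ℝ} (h1 : -1 < t) (h2 : t < 1) : 0 < EGLg t := by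
  unfold EGLg
  apply Real.rpow_pos_of_pos
  have h3 : 0 < (1 - t) * (1 + t) := mul_pos (by linarith) (by linarith)
  nlinarith [sq_nonneg t, mul_pos h3 (by positivity : (0:ℝ) < 1 + t^2)]

lemma EGLg_cont : ContinuousOn EGLg (Ioo (-1) 1) := by
  intro t ht
  apply ContinuousAt.continuousWithinAt
  apply ContinuousAt.rpow_const
  · fun_prop
  · left
    have h3 : 0 < (1 - t) * (1 + t) := mul_pos (by linarith [ht.2]) (by linarith [ht.1])
    nlinarith [sq_nonneg t, mul_pos h3 (by positivity : (0:ℝ) < 1 + t^2)]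

lemma EGLg_meas : Measurable EGLg := by
  unfold EGLg
  fun_prop

lemma EGLg_intble : IntervalIntegrable EGLg volume 0 1 := by
  have hbound : IntervalIntegrable (fun t : ℝ => (1 - t) ^ (-(3/4):ℝ)) volume 0 1 := by
    have := (intervalIntegral.intervalIntegrable_rpow' (a := 0) (b := 1)
      (r := -(3/4)) (by norm_num)).comp_sub_left 1
    simpa using this.symm
  rw [intervalIntegrable_iff] at hbound ⊢
  apply MeasureTheory.Integrable.mono hbound (EGLg_meas.aestronglyMeasurable)
  rw [uIoc_of_le (by norm_num : (0:ℝ) ≤ 1)]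
  filter_upwards [ae_restrict_mem measurableSet_Ioc] with t ht
  rw [Real.norm_eq_abs, Real.norm_eq_abs, abs_of_nonneg (EGLg_nonneg t ⟨le_of_lt ht.1, ht.2⟩),
    abs_of_nonneg (Real.rpow_nonneg (by linarith [ht.2] : (0:ℝ) ≤ 1 - t) _)]
  unfold EGLg
  rcases eq_or_lt_of_le ht.2 with h1 | h1
  · subst h1; norm_num
  · apply Real.rpow_le_rpow_of_nonpos
    · have h3 : 0 < (1 - t) * (1 + t) := mul_pos (by linarith) (by linarith [ht.1])
      nlinarith [sq_nonneg t, mul_pos h3 (by positivity : (0:ℝ) < 1 + t^2)]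
    · have := pow_le_pow_of_le_one ht.1.le (le_of_lt h1) (by norm_num : 1 ≤ 4)
      simpa using by linarith [this]
    · norm_num

local notation "F" => arcsinpq (4/3) 4
local notation "S" => sinHalf (4/3) 4

lemma EGLg_intble_sub {x y : ℝ} (hx : x ∈ Icc (0:ℝ) 1) (hy : y ∈ Icc (0:ℝ) 1) :
    IntervalIntegrable EGLg volume x y := by
  apply EGLg_intble.mono_set
  rw [← uIcc_of_le (by norm_num : (0:ℝ) ≤ 1)] at hx hy
  exact uIcc_subset_uIcc hx hy

lemma F_strictMonoOn : StrictMonoOn F (Icc 0 1) := by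
  intro x hx y hy hxy
  have h1 : IntervalIntegrable EGLg volume 0 x := EGLg_intble_sub (by norm_num) hx
  have h2 : IntervalIntegrable EGLg volume x y := EGLg_intble_sub hx hy
  have key : F y = F x + ∫ t in x..y, EGLg t := by
    rw [EGL_F_eq, EGL_F_eq, intervalIntegral.integral_add_adjacent_intervals h1 h2]
  have hpos : 0 < ∫ t in x..y, EGLg t := by
    apply intervalIntegral.intervalIntegral_pos_of_pos_on h2 _ hxy
    intro t ht
    exact EGLg_pos (by linarith [hx.1, ht.1]) (by linarith [hy.2, ht.2])
  linarith

lemma F0 : F 0 = 0 := by simp [arcsinpq]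

lemma F_cont : ContinuousOn F (Icc 0 1) := by
  have := intervalIntegral.continuousOn_primitive_interval
    (f := EGLg) (a := (0:ℝ)) (b := 1) (μ := volume) ?_
  · rw [uIcc_of_le (by norm_num : (0:ℝ) ≤ 1)] at this
    intro x hx
    exact ((this x hx).congr (fun y hy => EGL_F_eq y) (EGL_F_eq x))
  · rw [uIcc_of_le (by norm_num : (0:ℝ) ≤ 1), ← intervalIntegrable_iff_integrableOn_Icc_of_le (by norm_num)]
    exact EGLg_intble

lemma F1_pos : 0 < F 1 := by
  have := F_strictMonoOn (by norm_num : (0:ℝ) ∈ Icc (0:ℝ) 1) (by norm_num : (1:ℝ) ∈ Icc (0:ℝ) 1)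
    zero_lt_one
  rwa [F0] at this

lemma F_surj {y : ℝ} (hy : y ∈ Icc 0 (F 1)) : ∃ s ∈ Icc (0:ℝ) 1, F s = y := by
  have h := intermediate_value_Icc (by norm_num : (0:ℝ) ≤ 1) F_cont
  rw [F0] at h
  obtain ⟨s, hs, hfs⟩ := h hy
  exact ⟨s, hs, hfs⟩

lemma S_mem {y : ℝ} (hy : y ∈ Icc 0 (F 1)) : S y ∈ Icc (0:ℝ) 1 :=
  Function.invFunOn_mem (F_surj hy)

lemma F_S {y : ℝ} (hy : y ∈ Icc 0 (F 1)) : F (S y) = y :=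
  Function.invFunOn_eq (F_surj hy)

lemma S_F {s : ℝ} (hs : s ∈ Icc (0:ℝ) 1) : S (F s) = s :=
  F_strictMonoOn.injOn.leftInvOn_invFunOn hs

lemma S0 : S 0 = 0 := by
  have := S_F (by norm_num : (0:ℝ) ∈ Icc (0:ℝ) 1)
  rwa [F0] at this

lemma S_lt_one {y : ℝ} (hy : y ∈ Ico 0 (F 1)) : S y < 1 := by
  rcases lt_or_eq_of_le (S_mem ⟨hy.1, hy.2.le⟩).2 with h | h
  · exact h
  · exfalso
    have h2 := F_S ⟨hy.1, hy.2.le⟩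
    rw [h] at h2
    linarith [hy.2]

local notation "Sin" => sinpq (4/3) 4

lemma sinpq_reduce {x : ℝ} (h1 : -(2 * F 1) < x) (h2 : x < 2 * F 1) :
    Sin x = if x < 0 then -(S (if -x ≤ 2 * F 1 / 2 then -x else 2 * F 1 + x))
      else S (if x ≤ 2 * F 1 / 2 then x else 2 * F 1 - x) := by
  have hT : pipq (4/3) 4 = 2 * F 1 := rfl
  have hfl : ⌊(x + 2 * F 1) / (2 * (2 * F 1))⌋ = 0 := by
    rw [Int.floor_eq_zero_iff]
    constructor
    · apply div_nonneg (by linarith) (by linarith [F1_pos])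
    · rw [div_lt_one (by linarith [F1_pos])]
      linarith
  simp only [sinpq, hT, hfl]
  norm_num

lemma sinpq_eq_S {x : ℝ} (h0 : 0 ≤ x) (h1 : x ≤ F 1) : Sin x = S x := by
  rw [sinpq_reduce (by linarith [F1_pos]) (by linarith [F1_pos])]
  rw [if_neg (not_lt.mpr h0), if_pos (by linarith)]

lemma sinpq_eq_neg_S {x : ℝ} (h0 : x < 0) (h1 : -(F 1) ≤ x) : Sin x = -(S (-x)) := by
  rw [sinpq_reduce (by linarith [F1_pos]) (by linarith [F1_pos])]
  rw [if_pos h0, if_pos (by linarith)]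

lemma F_odd (x : ℝ) : F (-x) = -(F x) := by
  rw [EGL_F_eq, EGL_F_eq]
  have heven : ∀ t : ℝ, EGLg (-t) = EGLg t := by
    intro t; unfold EGLg; rw [Even.neg_pow (by decide)]
  have := intervalIntegral.integral_comp_neg (f := EGLg) (a := (0:ℝ)) (b := x)
  simp only [heven, neg_zero] at this
  rw [show (∫ t in (0:ℝ)..(-x), EGLg t) = -∫ t in (-x)..(0:ℝ), EGLg t from
    intervalIntegral.integral_symm _ _, ← this]

lemma F_strictMonoOn' : StrictMonoOn F (Icc (-1) 1) := by
  intro a ha b hb hab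
  rcases le_or_gt 0 a with h0a | h0a
  · exact F_strictMonoOn ⟨h0a, ha.2⟩ ⟨by linarith, hb.2⟩ hab
  · rcases lt_or_ge b 0 with h0b | h0b
    · have hkey : F (-b) < F (-a) := F_strictMonoOn ⟨by linarith, by linarith [hb.1]⟩
        ⟨by linarith, by linarith [ha.1]⟩ (by linarith)
      rw [F_odd, F_odd] at hkey
      linarith
    · have hFa : 0 < F (-a) := by
        have h5 : F 0 < F (-a) := F_strictMonoOn (by norm_num : (0:ℝ) ∈ Icc (0:ℝ) 1)
          ⟨by linarith, by linarith [ha.1]⟩ (by linarith)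
        rwa [F0] at h5
      have hFb : 0 ≤ F b := by
        rcases eq_or_lt_of_le h0b with h | h
        · rw [← h, F0]
        · have h6 : F 0 < F b := F_strictMonoOn (by norm_num : (0:ℝ) ∈ Icc (0:ℝ) 1)
            ⟨by linarith, hb.2⟩ h
          rw [F0] at h6; linarith
      have h7 := F_odd a
      linarith
lemma F_S_full {y : ℝ} (h1 : -(F 1) ≤ y) (h2 : y ≤ F 1) : F (Sin y) = y := by
  rcases le_or_gt 0 y with h0 | h0
  · rw [sinpq_eq_S h0 h2, F_S ⟨h0, h2⟩]
  · rw [sinpq_eq_neg_S h0 h1, F_odd, F_S ⟨by linarith, by linarith⟩]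
    ring

lemma sinpq_mem {y : ℝ} (h1 : -(F 1) ≤ y) (h2 : y ≤ F 1) : Sin y ∈ Icc (-1:ℝ) 1 := by
  rcases le_or_gt 0 y with h0 | h0
  · rw [sinpq_eq_S h0 h2]
    have := S_mem ⟨h0, h2⟩
    exact ⟨by linarith [this.1], this.2⟩
  · rw [sinpq_eq_neg_S h0 h1]
    have := S_mem (y := -y) ⟨by linarith, by linarith⟩
    exact ⟨by linarith [this.2], by linarith [this.1]⟩

lemma sinpq_mem_open {y : ℝ} (h1 : -(F 1) < y) (h2 : y < F 1) : Sin y ∈ Ioo (-1:ℝ) 1 := by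
  rcases le_or_gt 0 y with h0 | h0
  · rw [sinpq_eq_S h0 h2.le]
    have hm := S_mem ⟨h0, h2.le⟩
    exact ⟨by linarith [hm.1], S_lt_one ⟨h0, h2⟩⟩
  · rw [sinpq_eq_neg_S h0 h1.le]
    have hm := S_mem (y := -y) ⟨by linarith, by linarith⟩
    have := S_lt_one (y := -y) ⟨by linarith, by linarith⟩
    exact ⟨by linarith, by linarith [hm.1]⟩

lemma sinpq_strictMonoOn : StrictMonoOn Sin (Icc (-(F 1)) (F 1)) := by
  intro a ha b hb hab
  by_contra hle
  push_neg at hle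
  have h1 := F_S_full ha.1 ha.2
  have h2 := F_S_full hb.1 hb.2
  rcases eq_or_lt_of_le hle with h | h
  · rw [h] at h2; rw [h1] at h2; linarith
  · have h3 := F_strictMonoOn' (sinpq_mem hb.1 hb.2) (sinpq_mem ha.1 ha.2) h
    rw [h1, h2] at h3
    linarith

lemma sinpq_F {v : ℝ} (hv : v ∈ Icc (-1:ℝ) 1) : Sin (F v) = v := by
  rcases le_or_gt 0 v with h0 | h0
  · have hmem : F v ∈ Icc (0:ℝ) (F 1) := by
      constructor
      · have h5 := F_strictMonoOn.monotoneOn (by norm_num : (0:ℝ) ∈ Icc (0:ℝ) 1) ⟨h0, hv.2⟩ h0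
        rwa [F0] at h5
      · exact F_strictMonoOn.monotoneOn ⟨h0, hv.2⟩ (by norm_num) hv.2
    rw [sinpq_eq_S hmem.1 hmem.2, S_F ⟨h0, hv.2⟩]
  · have hneg : F v < 0 := by
      have h5 := F_strictMonoOn' hv (by norm_num : (0:ℝ) ∈ Icc (-1:ℝ) 1) h0
      rwa [F0] at h5
    have hge : -(F 1) ≤ F v := by
      have h5 := F_strictMonoOn'.monotoneOn (by norm_num : (-1:ℝ) ∈ Icc (-1:ℝ) 1) hv hv.1
      rwa [show (-1:ℝ) = -(1:ℝ) by norm_num, F_odd] at h5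
    rw [sinpq_eq_neg_S hneg hge, show -F v = F (-v) from (F_odd v).symm,
      S_F ⟨by linarith, by linarith [hv.1]⟩]
    ring

lemma sinpq_contAt {a : ℝ} (h1 : -(F 1) < a) (h2 : a < F 1) : ContinuousAt Sin a := by
  apply continuousAt_of_monotoneOn_of_image_mem_nhds sinpq_strictMonoOn.monotoneOn
    (Icc_mem_nhds h1 h2)
  have hmem := sinpq_mem_open h1 h2
  apply mem_of_superset (Ioo_mem_nhds hmem.1 hmem.2)
  intro v hv
  refine ⟨F v, ⟨?_, ?_⟩, sinpq_F ⟨hv.1.le, hv.2.le⟩⟩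
  · have h5 := F_strictMonoOn'.monotoneOn (by norm_num : (-1:ℝ) ∈ Icc (-1:ℝ) 1)
      ⟨hv.1.le, hv.2.le⟩ hv.1.le
    rwa [show (-1:ℝ) = -(1:ℝ) by norm_num, F_odd] at h5
  · exact F_strictMonoOn'.monotoneOn ⟨hv.1.le, hv.2.le⟩ (by norm_num) hv.2.le

lemma EGLg_contAt {s : ℝ} (h : s ∈ Ioo (-1:ℝ) 1) : ContinuousAt EGLg s := by
  apply ContinuousAt.rpow_const
  · fun_prop
  · left
    have h3 : 0 < (1 - s) * (1 + s) := mul_pos (by linarith [h.2]) (by linarith [h.1])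
    nlinarith [sq_nonneg s, mul_pos h3 (by positivity : (0:ℝ) < 1 + s^2)]

lemma hasDerivAt_F {s : ℝ} (h : s ∈ Ioo (-1:ℝ) 1) : HasDerivAt F (EGLg s) s := by
  have hF : (arcsinpq (4/3) 4 : ℝ → ℝ) = fun x => ∫ t in (0:ℝ)..x, EGLg t := funext EGL_F_eq
  rw [hF]
  apply intervalIntegral.integral_hasDerivAt_right
  · rcases le_or_gt 0 s with h0 | h0
    · exact EGLg_intble_sub (by norm_num) ⟨h0, h.2.le⟩
    · apply ContinuousOn.intervalIntegrable
      apply EGLg_cont.mono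
      rw [uIcc_of_ge h0.le]
      intro t ht
      exact ⟨by linarith [ht.1, h.1], by linarith [ht.2]⟩
  · exact EGLg_meas.stronglyMeasurable.stronglyMeasurableAtFilter
  · exact EGLg_contAt h

lemma sinpq_hasDerivAt {a : ℝ} (h1 : -(F 1) < a) (h2 : a < F 1) :
    HasDerivAt Sin ((EGLg (Sin a))⁻¹) a := by
  have hmem := sinpq_mem_open h1 h2
  apply HasDerivAt.of_local_left_inverse (sinpq_contAt h1 h2) (hasDerivAt_F hmem)
    (ne_of_gt (EGLg_pos hmem.1 hmem.2))
  filter_upwards [Ioo_mem_nhds h1 h2] with y hy using F_S_full hy.1.le hy.2.le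

noncomputable def EGLu (s : ℝ) : ℝ :=
  2 * s * (1 - s^4) ^ ((1:ℝ)/4) / Real.sqrt (1 + 4 * s^4 * (1 - s^4))

section ulemmas
variable {s : ℝ} (hs0 : 0 ≤ s) (hs4 : s^4 ≤ 1/2)

lemma hA_pos (hs4 : s^4 ≤ 1/2) : 0 < 1 - s^4 := by linarith
lemma hB_pos (hs0 : 0 ≤ s) (hs4 : s^4 ≤ 1/2) : 0 < 1 + 4 * s^4 * (1 - s^4) := by
  have h1 : 0 ≤ s^4 := by positivity
  nlinarith

lemma u_nonneg (hs0 : 0 ≤ s) (hs4 : s^4 ≤ 1/2) : 0 ≤ EGLu s := by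
  unfold EGLu
  have := hA_pos hs4
  positivity

lemma P_pow4 (hs4 : s^4 ≤ 1/2) : ((1 - s^4) ^ ((1:ℝ)/4)) ^ (4:ℕ) = 1 - s^4 := by
  rw [← Real.rpow_natCast ((1 - s^4) ^ ((1:ℝ)/4)) 4, ← Real.rpow_mul (hA_pos hs4).le]
  norm_num

lemma u_pow4 (hs0 : 0 ≤ s) (hs4 : s^4 ≤ 1/2) :
    (EGLu s)^(4:ℕ) = 16 * s^4 * (1 - s^4) / (1 + 4 * s^4 * (1 - s^4))^2 := by
  unfold EGLu
  rw [div_pow, mul_pow, mul_pow, P_pow4 hs4]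
  congr 1
  · ring
  · rw [show (4:ℕ) = 2*2 by norm_num, pow_mul, Real.sq_sqrt (hB_pos hs0 hs4).le]

lemma one_sub_u4 (hs0 : 0 ≤ s) (hs4 : s^4 ≤ 1/2) :
    1 - (EGLu s)^(4:ℕ) = (1 - 2*s^4)^4 / (1 + 4 * s^4 * (1 - s^4))^2 := by
  rw [u_pow4 hs0 hs4]
  have hB := hB_pos hs0 hs4
  rw [sub_eq_iff_eq_add, ← add_div, eq_div_iff (by positivity)]
  ring

lemma u_le_one (hs0 : 0 ≤ s) (hs4 : s^4 ≤ 1/2) : EGLu s ≤ 1 := by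
  have h1 : (EGLu s)^(4:ℕ) ≤ 1 := by
    have h2 := one_sub_u4 hs0 hs4
    have h3 : 0 ≤ (1 - 2*s^4)^4 / (1 + 4 * s^4 * (1 - s^4))^2 := by positivity
    linarith
  exact (pow_le_one_iff_of_nonneg (u_nonneg hs0 hs4) (by norm_num)).mp h1

lemma u_lt_one (hs0 : 0 ≤ s) (hs4 : s^4 < 1/2) : EGLu s < 1 := by
  have h1 : (EGLu s)^(4:ℕ) < 1 := by
    have h2 := one_sub_u4 hs0 hs4.le
    have h3 : 0 < (1 - 2*s^4)^4 / (1 + 4 * s^4 * (1 - s^4))^2 := by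
      apply div_pos
      · have h4 : (1:ℝ) - 2*s^4 > 0 := by linarith
        positivity
      · have h5 := hB_pos hs0 hs4.le
        positivity
    linarith
  by_contra h
  push_neg at h
  have h6 : (1:ℝ) ≤ (EGLu s)^(4:ℕ) := one_le_pow₀ h
  linarith

end ulemmas

section ulemmas2
variable {s : ℝ}

lemma EGLg_u (hs0 : 0 ≤ s) (hs4 : s^4 < 1/2) :
    EGLg (EGLu s)
      = (1 + 4*s^4*(1-s^4)) * Real.sqrt (1 + 4*s^4*(1-s^4)) / (1 - 2*s^4)^3 := by
  unfold EGLg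
  rw [one_sub_u4 hs0 hs4.le]
  have hEpos : 0 < 1 - 2*s^4 := by linarith
  have hBpos : 0 < 1 + 4*s^4*(1-s^4) := hB_pos hs0 hs4.le
  set E : ℝ := 1 - 2*s^4
  set B : ℝ := 1 + 4*s^4*(1-s^4)
  set Q : ℝ := Real.sqrt B with hQdef
  have hQ : Q^2 = B := Real.sq_sqrt hBpos.le
  have hQ0 : 0 < Q := Real.sqrt_pos.mpr hBpos
  have h1 : E^4/B^2 = (E/Q)^(4:ℕ) := by
    rw [div_pow, show Q^(4:ℕ) = (Q^2)^2 by ring, hQ]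
  rw [h1, ← Real.rpow_natCast (E/Q) 4, ← Real.rpow_mul (by positivity),
    show ((4:ℕ):ℝ)*(-(3/4)) = -3 by norm_num,
    show ((-3):ℝ) = -(3:ℝ) by norm_num, Real.rpow_neg (by positivity),
    show (3:ℝ) = ((3:ℕ):ℝ) by norm_num, Real.rpow_natCast]
  rw [div_pow, inv_div, show Q^(3:ℕ) = Q^2*Q by ring, hQ]

lemma EGLu_hasDerivAt (hs0 : 0 ≤ s) (hs4 : s^4 < 1/2) :
    HasDerivAt EGLu
      (2 * (1 - 2*s^4)^3 * (1 - s^4) ^ ((1:ℝ)/4) /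
        ((1 - s^4) * (1 + 4*s^4*(1-s^4)) * Real.sqrt (1 + 4*s^4*(1-s^4)))) s := by
  have hEpos : 0 < 1 - 2*s^4 := by linarith
  have hApos : 0 < 1 - s^4 := hA_pos hs4.le
  have hBpos : 0 < 1 + 4*s^4*(1-s^4) := hB_pos hs0 hs4.le
  have hQ0 : 0 < Real.sqrt (1 + 4*s^4*(1-s^4)) := Real.sqrt_pos.mpr hBpos
  have hQ : Real.sqrt (1 + 4*s^4*(1-s^4))^2 = 1 + 4*s^4*(1-s^4) := Real.sq_sqrt hBpos.le
  -- derivative of inner 1 - s^4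
  have hA' : HasDerivAt (fun y : ℝ => 1 - y^4) (-(4*s^3)) s := by
    simpa using (hasDerivAt_pow 4 s).const_sub 1
  -- derivative of numerator
  have hnum : HasDerivAt (fun y : ℝ => 2 * y * (1 - y^4) ^ ((1:ℝ)/4))
      (2 * (1 - s^4) ^ ((1:ℝ)/4)
        + 2 * s * ((1:ℝ)/4 * (1 - s^4) ^ ((1:ℝ)/4 - 1) * (-(4*s^3)))) s := by
    have h2 := hA'.rpow_const (p := (1:ℝ)/4) (Or.inl (ne_of_gt hApos))
    have h3 : HasDerivAt (fun y : ℝ => 2 * y) 2 s := by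
      simpa using (hasDerivAt_id s).const_mul 2
    have := h3.mul h2
    refine this.congr_deriv ?_
    ring
  -- derivative of B
  have hB' : HasDerivAt (fun y : ℝ => 1 + 4*y^4*(1-y^4)) (16*s^3 - 32*s^7) s := by
    have h4 : HasDerivAt (fun y : ℝ => 4*y^4) (4*(4*s^3)) s := by
      simpa using (hasDerivAt_pow 4 s).const_mul 4
    have h5 := (h4.mul hA').const_add 1
    refine h5.congr_deriv ?_
    ring
  have hden : HasDerivAt (fun y : ℝ => Real.sqrt (1 + 4*y^4*(1-y^4)))
      ((16*s^3 - 32*s^7) / (2 * Real.sqrt (1 + 4*s^4*(1-s^4)))) s :=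
    hB'.sqrt (ne_of_gt hBpos)
  have hdiv := hnum.div hden (ne_of_gt hQ0)
  refine hdiv.congr_deriv ?_
  symm
  rw [show (1:ℝ)/4 - 1 = -(3/4) by norm_num]
  have hP : (1 - s^4) ^ (-(3/4) : ℝ) = (1 - s^4) ^ ((1:ℝ)/4) / (1 - s^4) := by
    rw [show (-(3/4) : ℝ) = (1:ℝ)/4 - 1 by norm_num, Real.rpow_sub hApos, Real.rpow_one]
  rw [hP]
  set P : ℝ := (1 - s^4) ^ ((1:ℝ)/4)
  set Q : ℝ := Real.sqrt (1 + 4*s^4*(1-s^4)) with hQdef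
  rw [show (1 + 4*s^4*(1-s^4)) = Q^2 from hQ.symm]
  have hQne : Q ≠ 0 := ne_of_gt hQ0
  have hAne : (1 - s^4) ≠ 0 := ne_of_gt hApos
  field_simp
  linear_combination (P * (4*s^4 - 2)) * hQ
end ulemmas2

noncomputable def EGLc0 : ℝ := (2:ℝ) ^ (-((1:ℝ)/4))

lemma c0_pos : 0 < EGLc0 := Real.rpow_pos_of_pos (by norm_num) _

lemma c0_pow4 : EGLc0 ^ (4:ℕ) = 1/2 := by
  unfold EGLc0
  rw [← Real.rpow_natCast ((2:ℝ) ^ (-((1:ℝ)/4))) 4, ← Real.rpow_mul (by norm_num)]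
  norm_num

lemma c0_lt_one : EGLc0 < 1 :=
  Real.rpow_lt_one_of_one_lt_of_neg (by norm_num) (by norm_num)

lemma u_c0 : EGLu EGLc0 = 1 := by
  unfold EGLu
  rw [c0_pow4]
  have h1 : (1 - 1/2 : ℝ) = 1/2 := by norm_num
  rw [h1]
  have h2 : (1 + 4 * (1/2) * (1/2) : ℝ) = 2 := by norm_num
  rw [h2]
  have h3 : ((1:ℝ)/2) ^ ((1:ℝ)/4) = (2:ℝ) ^ (-((1:ℝ)/4)) := by
    rw [show (1/2:ℝ) = 2⁻¹ by norm_num, ← Real.rpow_neg_one (2:ℝ),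
      ← Real.rpow_mul (by norm_num)]
    norm_num
  rw [h3]
  unfold EGLc0
  rw [Real.sqrt_eq_rpow, div_eq_one_iff_eq (by positivity)]
  nth_rewrite 1 [← Real.rpow_one (2:ℝ)]
  rw [← Real.rpow_add (by norm_num : (0:ℝ) < 2), ← Real.rpow_add (by norm_num : (0:ℝ) < 2)]
  norm_num

noncomputable def EGLx0 : ℝ := F EGLc0

lemma c0_mem : EGLc0 ∈ Icc (0:ℝ) 1 := ⟨c0_pos.le, c0_lt_one.le⟩

lemma x0_pos : 0 < EGLx0 := by
  have h : F 0 < F EGLc0 := F_strictMonoOn (by norm_num) c0_mem c0_pos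
  rw [F0] at h
  exact h

lemma x0_lt : EGLx0 < F 1 := F_strictMonoOn c0_mem (by norm_num) c0_lt_one

lemma Sin_x0_facts {x : ℝ} (hx : x ∈ Icc 0 EGLx0) :
    Sin x = S x ∧ 0 ≤ S x ∧ S x ≤ EGLc0 := by
  have hx1 : x ≤ F 1 := le_trans hx.2 x0_lt.le
  refine ⟨sinpq_eq_S hx.1 hx1, (S_mem ⟨hx.1, hx1⟩).1, ?_⟩
  by_contra h
  push_neg at h
  have h2 : F EGLc0 < F (S x) := F_strictMonoOn c0_mem (S_mem ⟨hx.1, hx1⟩) h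
  rw [F_S ⟨hx.1, hx1⟩] at h2
  exact absurd h2 (not_lt.mpr hx.2)

lemma Sin_pow4_lt {x : ℝ} (hx : x ∈ Ico 0 EGLx0) : (Sin x)^4 < 1/2 := by
  obtain ⟨he, h0, hle⟩ := Sin_x0_facts ⟨hx.1, hx.2.le⟩
  have hlt : S x < EGLc0 := by
    rcases lt_or_eq_of_le hle with h | h
    · exact h
    · exfalso
      have := F_S ⟨hx.1, le_trans hx.2.le x0_lt.le⟩
      rw [h] at this
      have : x = EGLx0 := by rw [← this]; rfl
      linarith [hx.2]
  rw [he, ← c0_pow4]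
  exact pow_lt_pow_left₀ hlt h0 (by norm_num)

lemma G_hasDerivAt {x : ℝ} (hx : x ∈ Ico 0 EGLx0) :
    HasDerivAt (fun y => F (EGLu (Sin y))) 2 x := by
  have hx1 : -(F 1) < x := by linarith [hx.1, F1_pos]
  have hx2 : x < F 1 := lt_trans hx.2 x0_lt
  obtain ⟨he, hs0', _⟩ := Sin_x0_facts ⟨hx.1, hx.2.le⟩
  set s := Sin x with hsdef
  have hs0 : 0 ≤ s := by rw [he]; exact hs0'
  have hs4 : s^4 < 1/2 := Sin_pow4_lt hx
  have hApos : 0 < 1 - s^4 := hA_pos hs4.le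
  have hBpos : 0 < 1 + 4*s^4*(1-s^4) := hB_pos hs0 hs4.le
  have hEpos : 0 < 1 - 2*s^4 := by linarith
  have hQ0 : 0 < Real.sqrt (1 + 4*s^4*(1-s^4)) := Real.sqrt_pos.mpr hBpos
  have hSin := sinpq_hasDerivAt hx1 hx2
  have hu := EGLu_hasDerivAt hs0 hs4
  have huS := hu.comp x hSin
  have humem : EGLu s ∈ Ioo (-1:ℝ) 1 :=
    ⟨by linarith [u_nonneg hs0 hs4.le], u_lt_one hs0 hs4⟩
  have hF := hasDerivAt_F humem
  have htot := hF.comp x huS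
  refine htot.congr_deriv ?_
  symm
  rw [EGLg_u hs0 hs4]
  show (2:ℝ) = _ * (_ * (EGLg s)⁻¹)
  unfold EGLg
  have hP : (1 - s^4) ^ (-(3/4) : ℝ) = (1 - s^4) ^ ((1:ℝ)/4) / (1 - s^4) := by
    rw [show (-(3/4) : ℝ) = (1:ℝ)/4 - 1 by norm_num, Real.rpow_sub hApos, Real.rpow_one]
  rw [hP]
  have hPpos : 0 < (1 - s^4) ^ ((1:ℝ)/4) := Real.rpow_pos_of_pos hApos _
  field_simp

lemma G_eq {x : ℝ} (hx : x ∈ Icc 0 EGLx0) : F (EGLu (Sin x)) = 2 * x := by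
  have hcontSin : ContinuousOn Sin (Icc 0 EGLx0) := by
    intro y hy
    exact (sinpq_contAt (by linarith [hy.1, F1_pos])
      (lt_of_le_of_lt hy.2 x0_lt)).continuousWithinAt
  have hcontu : ContinuousOn EGLu (Icc 0 EGLc0) := by
    intro y hy
    have hy4 : y^4 ≤ 1/2 := by
      rw [← c0_pow4]; exact pow_le_pow_left₀ hy.1 hy.2 4
    have hBpos := hB_pos hy.1 hy4
    apply ContinuousAt.continuousWithinAt
    apply ContinuousAt.div
    · apply ContinuousAt.mul (by fun_prop)
      exact ((continuous_const.sub (continuous_pow 4)).continuousAt).rpow_const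
        (Or.inr (by norm_num))
    · exact (Real.continuous_sqrt.comp (by fun_prop)).continuousAt
    · exact ne_of_gt (Real.sqrt_pos.mpr hBpos)
  have hmapsSin : MapsTo Sin (Icc 0 EGLx0) (Icc 0 EGLc0) := by
    intro y hy
    obtain ⟨he, h0, hle⟩ := Sin_x0_facts hy
    rw [he]; exact ⟨h0, hle⟩
  have hmapsu : MapsTo EGLu (Icc 0 EGLc0) (Icc (0:ℝ) 1) := by
    intro y hy
    have hy4 : y^4 ≤ 1/2 := by
      rw [← c0_pow4]; exact pow_le_pow_left₀ hy.1 hy.2 4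
    exact ⟨u_nonneg hy.1 hy4, u_le_one hy.1 hy4⟩
  have hcontG : ContinuousOn (fun y => F (EGLu (Sin y))) (Icc 0 EGLx0) :=
    F_cont.comp (hcontu.comp hcontSin hmapsSin) (hmapsu.comp hmapsSin)
  have hval : F (EGLu (Sin 0)) = 2 * 0 := by
    rw [sinpq_eq_S le_rfl F1_pos.le, S0]
    have : EGLu 0 = 0 := by unfold EGLu; norm_num
    rw [this, F0]; ring
  have := eq_of_has_deriv_right_eq (f' := fun _ => (2:ℝ))
    (fun y hy => (G_hasDerivAt hy).hasDerivWithinAt)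
    (fun y _ => ((hasDerivAt_id y).const_mul 2).hasDerivWithinAt.congr_deriv (by norm_num))
    hcontG (by fun_prop) hval
  exact this x hx

lemma two_x0 : 2 * EGLx0 = F 1 := by
  have h := G_eq (x := EGLx0) ⟨x0_pos.le, le_rfl⟩
  rw [(Sin_x0_facts ⟨x0_pos.le, le_rfl⟩).1] at h
  have hS : S EGLx0 = EGLc0 := S_F c0_mem
  rw [hS, u_c0] at h
  exact h.symm

/-- Edmunds–Gurka–Lang multiple-angle formula: for `x ∈ [0, π_{4/3,4}/4)`,
`sin_{4/3,4}(2x) = 2 sin_{4/3,4}(x) cos_{4/3,4}(x)^{1/3} /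
  √(1 + 4 sin_{4/3,4}(x)^4 cos_{4/3,4}(x)^{4/3})`. -/
theorem EGL_multiple_angle :
    ∀ x ∈ Set.Ico (0:ℝ) (pipq (4/3) 4 / 4),
      sinpq (4/3) 4 (2*x)
        = 2 * sinpq (4/3) 4 x * cospq (4/3) 4 x ^ ((1:ℝ)/3) /
          Real.sqrt (1 + 4 * sinpq (4/3) 4 x ^ (4:ℕ) * cospq (4/3) 4 x ^ ((4:ℝ)/3)) := by
  intro x hx
  have hx0eq : pipq (4/3) 4 / 4 = EGLx0 := by
    have hpi : pipq (4/3) 4 = 2 * F 1 := rfl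
    rw [hpi, ← two_x0]; ring
  rw [hx0eq] at hx
  have hx1 : -(F 1) < x := by linarith [hx.1, F1_pos]
  have hx2 : x < F 1 := lt_trans hx.2 x0_lt
  have hs4 : (Sin x)^4 < 1/2 := Sin_pow4_lt hx
  obtain ⟨he, hs0', _⟩ := Sin_x0_facts ⟨hx.1, hx.2.le⟩
  have hs0 : 0 ≤ Sin x := by rw [he]; exact hs0'
  have hApos : 0 < 1 - (Sin x)^4 := hA_pos hs4.le
  have hcos : cospq (4/3) 4 x = (1 - (Sin x)^4) ^ ((3:ℝ)/4) := by
    unfold cospq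
    rw [(sinpq_hasDerivAt hx1 hx2).deriv]
    unfold EGLg
    rw [show (-(3/4) : ℝ) = -((3:ℝ)/4) by norm_num, Real.rpow_neg hApos.le, inv_inv]
  have hcos13 : cospq (4/3) 4 x ^ ((1:ℝ)/3) = (1 - (Sin x)^4) ^ ((1:ℝ)/4) := by
    rw [hcos, ← Real.rpow_mul hApos.le]
    norm_num
  have hcos43 : cospq (4/3) 4 x ^ ((4:ℝ)/3) = 1 - (Sin x)^4 := by
    rw [hcos, ← Real.rpow_mul hApos.le]
    norm_num
  have hRHS : 2 * Sin x * cospq (4/3) 4 x ^ ((1:ℝ)/3) /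
      Real.sqrt (1 + 4 * Sin x ^ (4:ℕ) * cospq (4/3) 4 x ^ ((4:ℝ)/3)) = EGLu (Sin x) := by
    rw [hcos13, hcos43]
    unfold EGLu
    norm_num
  rw [hRHS]
  have h2x1 : 0 ≤ 2*x := by linarith [hx.1]
  have h2x2 : 2*x ≤ F 1 := by linarith [hx.2, two_x0]
  rw [sinpq_eq_S h2x1 h2x2]
  apply F_strictMonoOn.injOn (S_mem ⟨h2x1, h2x2⟩)
    ⟨u_nonneg hs0 hs4.le, u_le_one hs0 hs4.le⟩
  rw [F_S ⟨h2x1, h2x2⟩, G_eq ⟨hx.1, hx.2.le⟩]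
end

section
/- For every x ∈ [0, π_{4/3,4}/4), one has sin_{4/3,4}(2x) = √2·sl(√2·x) / √(1 + sl(√2·x)^4), where sl is the lemniscate sine; moreover π_{4/3,4}/4 = ϖ/(2√2), where ϖ is the lemniscate constant. -/
open Real Set MeasureTheory Filter

open Topology intervalIntegral

noncomputable def Ffun (c : ℝ) (t : ℝ) : ℝ := (1 - t ^ (4:ℕ)) ^ (-c)

noncomputable def gfun (t : ℝ) : ℝ := Real.sqrt 2 * t / Real.sqrt (1 + t ^ 4)

noncomputable def gder (t : ℝ) : ℝ :=
  Real.sqrt 2 * (1 - t ^ 4) / ((1 + t ^ 4) * Real.sqrt (1 + t ^ 4))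

lemma intervalIntegrable_Ffun {c : ℝ} (hc0 : 0 < c) (hc : c < 1) :
    IntervalIntegrable (Ffun c) volume 0 1 := by
  have base : IntervalIntegrable (fun t : ℝ => t ^ (-c)) volume 0 1 :=
    intervalIntegral.intervalIntegrable_rpow' (by linarith)
  have refl : IntervalIntegrable (fun t : ℝ => (1 - t) ^ (-c)) volume 0 1 := by
    simpa using (base.comp_sub_left 1).symm
  refine refl.mono_fun ?_ ?_
  · apply Measurable.aestronglyMeasurable
    unfold Ffun
    fun_prop
  · rw [uIoc_of_le (by norm_num : (0:ℝ) ≤ 1)]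
    refine (MeasureTheory.ae_restrict_iff' measurableSet_Ioc).2 (Eventually.of_forall ?_)
    intro t ht
    rcases eq_or_lt_of_le ht.2 with h1 | h1
    · simp [Ffun, h1, Real.zero_rpow (by linarith : -c ≠ 0)]
    · have h0 : 0 < t := ht.1
      have h3 : t ^ 3 ≤ 1 := pow_le_one₀ h0.le h1.le
      have hle : 1 - t ≤ 1 - t ^ 4 := by nlinarith [mul_nonneg h0.le (sub_nonneg.2 h3)]
      have hpos : 0 < 1 - t := by linarith
      have := Real.rpow_le_rpow_of_nonpos hpos hle (by linarith : -c ≤ 0)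
      simp only [Ffun, Real.norm_eq_abs]
      rw [abs_of_nonneg (Real.rpow_nonneg (by nlinarith) _),
        abs_of_nonneg (Real.rpow_nonneg hpos.le _)]
      exact this

lemma hasDerivAt_gfun (t : ℝ) : HasDerivAt gfun (gder t) t := by
  have hb : (0:ℝ) < 1 + t ^ 4 := by positivity
  have hs : (0:ℝ) < Real.sqrt (1 + t ^ 4) := Real.sqrt_pos.2 hb
  have hinner : HasDerivAt (fun t : ℝ => 1 + t ^ 4) (4 * t ^ 3) t := by
    simpa using (hasDerivAt_pow 4 t).const_add 1
  have hden : HasDerivAt (fun t : ℝ => Real.sqrt (1 + t ^ 4))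
      (1 / (2 * Real.sqrt (1 + t ^ 4)) * (4 * t ^ 3)) t :=
    (Real.hasDerivAt_sqrt hb.ne').comp t hinner
  have hnum : HasDerivAt (fun t : ℝ => Real.sqrt 2 * t) (Real.sqrt 2) t := by
    simpa using (hasDerivAt_id t).const_mul (Real.sqrt 2)
  have := hnum.div hden hs.ne'
  refine (this.congr_deriv ?_ : HasDerivAt gfun _ t)
  symm
  unfold gder
  have hs2 : Real.sqrt (1 + t ^ 4) ^ 2 = 1 + t ^ 4 := Real.sq_sqrt hb.le
  field_simp
  linear_combination (-4 * t^4) * hs2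

lemma Ffun_pos {c : ℝ} {t : ℝ} (h0 : 0 ≤ t) (h1 : t < 1) : 0 < Ffun c t := by
  have h3 : t ^ 4 < 1 := pow_lt_one₀ h0 h1 (by norm_num)
  exact Real.rpow_pos_of_pos (by linarith) _

lemma gfun_nonneg {t : ℝ} (h0 : 0 ≤ t) : 0 ≤ gfun t := by
  unfold gfun; positivity

lemma sqrt2_mul_self : Real.sqrt 2 * Real.sqrt 2 = 2 :=
  Real.mul_self_sqrt (by norm_num)

lemma gfun_sq_aux {t : ℝ} : (Real.sqrt 2 * t) ^ 2 = 2 * t ^ 2 := by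
  rw [mul_pow, Real.sq_sqrt (by norm_num : (0:ℝ) ≤ 2)]

lemma gfun_le_one {t : ℝ} (h0 : 0 ≤ t) (h1 : t ≤ 1) : gfun t ≤ 1 := by
  unfold gfun
  rw [div_le_one (Real.sqrt_pos.2 (by positivity))]
  have h2 : Real.sqrt 2 * t = Real.sqrt (2 * t ^ 2) := by
    rw [Real.sqrt_mul (by norm_num), Real.sqrt_sq h0]
  rw [h2]
  exact Real.sqrt_le_sqrt (by nlinarith [sq_nonneg (1 - t^2)])

lemma gfun_lt_one {t : ℝ} (h0 : 0 ≤ t) (h1 : t < 1) : gfun t < 1 := by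
  unfold gfun
  rw [div_lt_one (Real.sqrt_pos.2 (by positivity))]
  have h2 : Real.sqrt 2 * t = Real.sqrt (2 * t ^ 2) := by
    rw [Real.sqrt_mul (by norm_num), Real.sqrt_sq h0]
  rw [h2]
  apply Real.sqrt_lt_sqrt (by positivity)
  have ht2 : t ^ 2 < 1 := by nlinarith
  nlinarith [mul_pos (sub_pos.2 ht2) (sub_pos.2 ht2)]

lemma gfun_one : gfun 1 = 1 := by
  unfold gfun
  rw [show (1:ℝ) + 1 ^ 4 = 2 by norm_num, mul_one,
    div_self (by positivity : Real.sqrt 2 ≠ 0)]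

lemma continuous_gder : Continuous gder := by
  unfold gder
  apply Continuous.div (by fun_prop) (by fun_prop)
  intro t
  positivity

lemma continuousOn_Ffun {c : ℝ} : ContinuousOn (Ffun c) (Ico 0 1) := by
  intro t ht
  apply ContinuousWithinAt.rpow_const
  · exact (continuous_const.sub (continuous_pow 4)).continuousWithinAt
  · left
    have : t ^ 4 < 1 := pow_lt_one₀ ht.1 ht.2 (by norm_num)
    simp only [ne_eq]
    intro h; rw [sub_eq_zero] at h; exact absurd h.symm (ne_of_lt this)

/-- Key substitution identity on `[0,1)`. -/
lemma key_subst {u : ℝ} (hu0 : 0 ≤ u) (hu1 : u < 1) :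
    (∫ t in (0:ℝ)..gfun u, Ffun (3/4) t) = Real.sqrt 2 * ∫ t in (0:ℝ)..u, Ffun (1/2) t := by
  have himg : gfun '' (uIcc 0 u) ⊆ Ico 0 1 := by
    rw [uIcc_of_le hu0]
    rintro y ⟨t, ht, rfl⟩
    exact ⟨gfun_nonneg ht.1, gfun_lt_one ht.1 (lt_of_le_of_lt ht.2 hu1)⟩
  have hcov := intervalIntegral.integral_comp_smul_deriv'
    (f := gfun) (f' := gder) (g := Ffun (3/4)) (a := 0) (b := u)
    (fun t _ => hasDerivAt_gfun t) continuous_gder.continuousOn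
    (continuousOn_Ffun.mono himg)
  have hg0 : gfun 0 = 0 := by unfold gfun; simp
  rw [hg0] at hcov
  rw [← hcov, ← intervalIntegral.integral_const_mul]
  apply intervalIntegral.integral_congr
  intro t ht
  rw [uIcc_of_le hu0] at ht
  have ht1 : t < 1 := lt_of_le_of_lt ht.2 hu1
  have ha : (0:ℝ) < 1 - t ^ 4 := by
    have := pow_lt_one₀ ht.1 ht1 (show 4 ≠ 0 by norm_num); linarith
  have hb : (0:ℝ) < 1 + t ^ 4 := by positivity
  have hsb : (0:ℝ) < Real.sqrt (1 + t ^ 4) := Real.sqrt_pos.2 hb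
  have hF : Ffun (3/4) (gfun t)
      = (1 - t ^ 4) ^ (-(3/2) : ℝ) * ((1 + t ^ 4) * Real.sqrt (1 + t ^ 4)) := by
    have hg4 : 1 - gfun t ^ 4 = ((1 - t ^ 4) / (1 + t ^ 4)) ^ 2 := by
      unfold gfun
      rw [div_pow, mul_pow, div_pow]
      rw [show Real.sqrt 2 ^ 4 = (Real.sqrt 2 ^ 2) ^ 2 by ring,
        show Real.sqrt (1 + t ^ 4) ^ 4 = (Real.sqrt (1 + t ^ 4) ^ 2) ^ 2 by ring,
        Real.sq_sqrt (by norm_num : (0:ℝ) ≤ 2), Real.sq_sqrt hb.le]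
      field_simp
      ring
    unfold Ffun
    rw [hg4, ← Real.rpow_natCast ((1 - t ^ 4) / (1 + t ^ 4)) 2, ← Real.rpow_mul (by positivity)]
    rw [Real.div_rpow ha.le hb.le]
    rw [show ((2:ℕ):ℝ) * -(3/4) = -(3/2) by norm_num]
    rw [div_eq_mul_inv, ← Real.rpow_neg hb.le]
    congr 1
    rw [show -(-(3/2)) = (1:ℝ) + (1/2) by norm_num, Real.rpow_add hb,
      Real.rpow_one, ← Real.sqrt_eq_rpow]
  simp only [Function.comp_apply, smul_eq_mul]
  rw [hF]
  unfold gder Ffun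
  set s := Real.sqrt (1 + t ^ 4) with hs_def
  set P := (1 - t ^ 4) ^ (-(1/2) : ℝ) with hP_def
  set Q := (1 - t ^ 4) ^ (-(3/2) : ℝ) with hQ_def
  have h32 : (1 - t ^ 4) * Q = P := by
    rw [hQ_def, hP_def]
    nth_rewrite 1 [← Real.rpow_one (1 - t ^ 4)]
    rw [← Real.rpow_add ha]
    norm_num
  rw [div_mul_eq_mul_div, div_eq_iff (by positivity)]
  linear_combination (Real.sqrt 2 * (1 + t^4) * s) * h32

lemma integrableOn_Ffun {c : ℝ} (hc0 : 0 < c) (hc : c < 1) :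
    IntegrableOn (Ffun c) (uIcc (0:ℝ) 1) volume := by
  rw [uIcc_of_le (by norm_num : (0:ℝ) ≤ 1)]
  exact (intervalIntegrable_iff_integrableOn_Icc_of_le (by norm_num)).1
    (intervalIntegrable_Ffun hc0 hc)

lemma contPrim {c : ℝ} (hc0 : 0 < c) (hc : c < 1) :
    ContinuousOn (fun y => ∫ t in (0:ℝ)..y, Ffun c t) (Icc 0 1) := by
  have := intervalIntegral.continuousOn_primitive_interval (a := (0:ℝ)) (b := 1)
    (μ := volume) (integrableOn_Ffun hc0 hc)
  rwa [uIcc_of_le (by norm_num : (0:ℝ) ≤ 1)] at this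

lemma strictMonoPrim {c : ℝ} (hc0 : 0 < c) (hc : c < 1) :
    StrictMonoOn (fun y => ∫ t in (0:ℝ)..y, Ffun c t) (Icc 0 1) := by
  intro a ha b hb hab
  have hsub : uIcc a b ⊆ uIcc (0:ℝ) 1 := by
    rw [uIcc_of_le hab.le, uIcc_of_le (by norm_num : (0:ℝ) ≤ 1)]
    exact Icc_subset_Icc ha.1 hb.2
  have hsub0 : uIcc (0:ℝ) a ⊆ uIcc (0:ℝ) 1 := by
    rw [uIcc_of_le ha.1, uIcc_of_le (by norm_num : (0:ℝ) ≤ 1)]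
    exact Icc_subset_Icc le_rfl ha.2
  have hint : IntervalIntegrable (Ffun c) volume a b :=
    (intervalIntegrable_Ffun hc0 hc).mono_set hsub
  have hint0 : IntervalIntegrable (Ffun c) volume 0 a :=
    (intervalIntegrable_Ffun hc0 hc).mono_set hsub0
  have hpos : 0 < ∫ t in a..b, Ffun c t := by
    apply intervalIntegral.intervalIntegral_pos_of_pos_on hint _ hab
    intro t ht
    exact Ffun_pos (le_trans ha.1 ht.1.le) (lt_of_lt_of_le ht.2 hb.2)
  have hadd := intervalIntegral.integral_add_adjacent_intervals hint0 hint
  simp only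
  linarith

lemma continuous_gfun : Continuous gfun := by
  unfold gfun
  apply Continuous.div (by fun_prop) (by fun_prop)
  intro t
  positivity

lemma key_subst_one :
    (∫ t in (0:ℝ)..(1:ℝ), Ffun (3/4) t) = Real.sqrt 2 * ∫ t in (0:ℝ)..(1:ℝ), Ffun (1/2) t := by
  have hmaps : MapsTo gfun (Icc (0:ℝ) 1) (Icc (0:ℝ) 1) := fun t ht =>
    ⟨gfun_nonneg ht.1, gfun_le_one ht.1 ht.2⟩
  have hφ : ContinuousWithinAt (fun u => ∫ t in (0:ℝ)..gfun u, Ffun (3/4) t) (Ico 0 1) 1 := by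
    have := ((contPrim (by norm_num) (by norm_num : (3/4:ℝ) < 1)).comp
      continuous_gfun.continuousOn hmaps) 1 (by norm_num)
    exact this.mono Ico_subset_Icc_self
  have hψ : ContinuousWithinAt (fun u => Real.sqrt 2 * ∫ t in (0:ℝ)..u, Ffun (1/2) t)
      (Ico 0 1) 1 := by
    have := ((contPrim (by norm_num) (by norm_num : (1/2:ℝ) < 1)).const_smul (Real.sqrt 2))
      1 (by norm_num)
    simpa [smul_eq_mul, Pi.smul_def] using this.mono Ico_subset_Icc_self
  have hne : (𝓝[Ico (0:ℝ) 1] (1:ℝ)).NeBot := by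
    apply mem_closure_iff_nhdsWithin_neBot.1
    rw [closure_Ico (by norm_num : (0:ℝ) ≠ 1)]
    exact ⟨by norm_num, le_rfl⟩
  have heq : ∀ᶠ u in 𝓝[Ico (0:ℝ) 1] (1:ℝ),
      (∫ t in (0:ℝ)..gfun u, Ffun (3/4) t)
        = Real.sqrt 2 * ∫ t in (0:ℝ)..u, Ffun (1/2) t :=
    eventually_mem_nhdsWithin.mono fun u hu => key_subst hu.1 hu.2
  have := tendsto_nhds_unique (hφ.tendsto) (hψ.tendsto.congr' (heq.mono fun u h => h.symm))
  rwa [gfun_one] at this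

lemma key_subst_Icc {u : ℝ} (hu : u ∈ Icc (0:ℝ) 1) :
    (∫ t in (0:ℝ)..gfun u, Ffun (3/4) t) = Real.sqrt 2 * ∫ t in (0:ℝ)..u, Ffun (1/2) t := by
  rcases eq_or_lt_of_le hu.2 with h | h
  · rw [h, gfun_one]; exact key_subst_one
  · exact key_subst hu.1 h


lemma arcsin_four (p x : ℝ) : arcsinpq p 4 x = ∫ t in (0:ℝ)..x, Ffun (1/p) t := by
  unfold arcsinpq Ffun
  simp_rw [show ∀ t : ℝ, t ^ (4:ℝ) = t ^ (4:ℕ) from fun t => by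
    rw [show (4:ℝ) = ((4:ℕ):ℝ) by norm_num, Real.rpow_natCast]]

lemma arcsin43 (x : ℝ) : arcsinpq (4/3) 4 x = ∫ t in (0:ℝ)..x, Ffun (3/4) t := by
  rw [arcsin_four]; norm_num

lemma arcsin2 (x : ℝ) : arcsinpq 2 4 x = ∫ t in (0:ℝ)..x, Ffun (1/2) t := by
  rw [arcsin_four]

lemma sinpq_eq_sinHalf {p q x : ℝ} (hT : 0 < pipq p q) (h0 : 0 ≤ x)
    (h2 : x ≤ pipq p q / 2) : sinpq p q x = sinHalf p q x := by
  have hfl : ⌊(x + pipq p q) / (2 * pipq p q)⌋ = 0 := by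
    rw [Int.floor_eq_zero_iff, Set.mem_Ico]
    constructor
    · positivity
    · rw [div_lt_one (by linarith)]; linarith
  unfold sinpq
  simp only [hfl, Int.cast_zero, mul_zero, sub_zero]
  rw [if_neg (by linarith), if_pos h2]

/-- For `x ∈ [0, π_{4/3,4}/4)`,
`sin_{4/3,4}(2x) = √2·sl(√2 x)/√(1+sl(√2 x)^4)` where `sl = sin_{2,4}` is the lemniscate sine;
moreover `π_{4/3,4}/4 = ϖ/(2√2)` where `ϖ = π_{2,4}` is the lemniscate constant. -/
theorem EGL_via_lemniscate :
    (∀ x ∈ Set.Ico (0:ℝ) (pipq (4/3) 4 / 4),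
      sinpq (4/3) 4 (2*x)
        = Real.sqrt 2 * sinpq 2 4 (Real.sqrt 2 * x) /
          Real.sqrt (1 + sinpq 2 4 (Real.sqrt 2 * x) ^ (4:ℕ))) ∧
    pipq (4/3) 4 / 4 = pipq 2 4 / (2 * Real.sqrt 2) := by
  have hAfun : arcsinpq (4/3) 4 = fun y => ∫ t in (0:ℝ)..y, Ffun (3/4) t := funext arcsin43
  have hLfun : arcsinpq 2 4 = fun y => ∫ t in (0:ℝ)..y, Ffun (1/2) t := funext arcsin2
  set L : ℝ → ℝ := fun y => ∫ t in (0:ℝ)..y, Ffun (1/2) t with hLdef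
  have hL0 : L 0 = 0 := intervalIntegral.integral_same
  have hL1pos : 0 < L 1 := by
    have h : L 0 < L 1 := strictMonoPrim (c := 1/2) (by norm_num) (by norm_num)
      (Set.left_mem_Icc.2 (by norm_num)) (Set.right_mem_Icc.2 (by norm_num)) one_pos
    rwa [hL0] at h
  have hA1 : (∫ t in (0:ℝ)..(1:ℝ), Ffun (3/4) t) = Real.sqrt 2 * L 1 := key_subst_one
  have hT : pipq (4/3) 4 = 2 * (Real.sqrt 2 * L 1) := by
    unfold pipq; rw [hAfun, ← hA1]
  have hW : pipq 2 4 = 2 * L 1 := by unfold pipq; rw [hLfun]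
  have hs2pos : (0:ℝ) < Real.sqrt 2 := Real.sqrt_pos.2 (by norm_num)
  constructor
  · intro x hx
    obtain ⟨hx0, hx4⟩ := hx
    have hTpos : 0 < pipq (4/3) 4 := by rw [hT]; positivity
    have hWpos : 0 < pipq 2 4 := by rw [hW]; linarith
    have hs2x : Real.sqrt 2 * x < L 1 := by
      have h1 : Real.sqrt 2 * x < Real.sqrt 2 * (pipq (4/3) 4 / 4) :=
        mul_lt_mul_of_pos_left hx4 hs2pos
      rw [hT] at h1
      nlinarith [sqrt2_mul_self, hs2pos]
    have e1 : sinpq (4/3) 4 (2*x) = sinHalf (4/3) 4 (2*x) :=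
      sinpq_eq_sinHalf hTpos (by linarith) (by rw [hT]; nlinarith [sqrt2_mul_self, hs2x, hs2pos, hL1pos])
    have e2 : sinpq 2 4 (Real.sqrt 2 * x) = sinHalf 2 4 (Real.sqrt 2 * x) :=
      sinpq_eq_sinHalf hWpos (by positivity) (by rw [hW]; linarith)
    rw [e1, e2]
    have hLex : ∃ u ∈ Set.Icc (0:ℝ) 1, arcsinpq 2 4 u = Real.sqrt 2 * x := by
      have hIVT := intermediate_value_Icc (by norm_num : (0:ℝ) ≤ 1)
        (contPrim (c := 1/2) (by norm_num) (by norm_num))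
      have hmem : Real.sqrt 2 * x ∈ Set.Icc (L 0) (L 1) :=
        ⟨by rw [hL0]; positivity, hs2x.le⟩
      obtain ⟨u, hu, huv⟩ := hIVT hmem
      exact ⟨u, hu, by rw [hLfun]; exact huv⟩
    set u₀ := sinHalf 2 4 (Real.sqrt 2 * x) with hu₀def
    have hu₀mem : u₀ ∈ Set.Icc (0:ℝ) 1 := Function.invFunOn_mem hLex
    have hu₀val : L u₀ = Real.sqrt 2 * x := by
      rw [← hLfun]
      exact Function.invFunOn_eq hLex
    have hkey : (∫ t in (0:ℝ)..gfun u₀, Ffun (3/4) t) = 2 * x := by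
      rw [key_subst_Icc hu₀mem]
      show Real.sqrt 2 * L u₀ = 2 * x
      rw [hu₀val, ← mul_assoc, sqrt2_mul_self]
    have hgmem : gfun u₀ ∈ Set.Icc (0:ℝ) 1 :=
      ⟨gfun_nonneg hu₀mem.1, gfun_le_one hu₀mem.1 hu₀mem.2⟩
    have hex : ∃ a ∈ Set.Icc (0:ℝ) 1, arcsinpq (4/3) 4 a = 2*x :=
      ⟨gfun u₀, hgmem, by rw [hAfun]; exact hkey⟩
    have hinj : Set.InjOn (arcsinpq (4/3) 4) (Set.Icc 0 1) := by
      rw [hAfun]; exact (strictMonoPrim (by norm_num) (by norm_num)).injOn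
    have hfin : sinHalf (4/3) 4 (2*x) = gfun u₀ := by
      apply hinj (Function.invFunOn_mem hex) hgmem
      rw [Function.invFunOn_eq hex, hAfun]
      exact hkey.symm
    rw [hfin]
    rfl
  · rw [hT, hW]
    rw [div_eq_div_iff (by norm_num) (by positivity)]
    nlinarith [sqrt2_mul_self, hL1pos]
end
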